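/- Let f : ℝⁿ → ℝ be differentiable, Q ∈ ℝ^{n×p}, x ∈ ℝⁿ, δ > 0, and let m̂(s) = c + ĝᵀ s + (1/2) sᵀ Ĥ s be a quadratic model with ĝ ∈ ℝᵖ and symmetric Ĥ ∈ ℝ^{p×p} satisfying ‖Ĥ‖ ≤ κ_h for some κ_h ≥ 1. Suppose m̂ is a (κ_ef, κ_eg; Q)-fully linear model of f in B(x, δ; Q), and suppose the trial step s_k ∈ ℝᵖ with ‖s_k‖ ≤ δ satisfies the fraction-of-Cauchy-decrease condition m̂(0) − m̂(s_k) ≥ (κ_fcd/2) ‖ĝ‖ min{δ, ‖ĝ‖/max(‖Ĥ‖, 1)} for some κ_fcd ∈ (0,1]. If δ ≤ min{1/κ_h, κ_fcd/(8 κ_ef)} ‖ĝ‖, then f(x + Q s_k) − f(x) ≤ −(κ_fcd/4) ‖ĝ‖ δ. -/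
import Mathlib


open MeasureTheory Matrix
open scoped RealInnerProductSpace

/-- The operator norm of a real matrix with respect to Euclidean norms
(a norm consistent with the Euclidean norm). -/
noncomputable def matOpNorm {n p : ℕ} (Q : Matrix (Fin n) (Fin p) ℝ) : ℝ :=
  ‖LinearMap.toContinuousLinearMap (Matrix.toEuclideanLin Q)‖

/-- **Lemma 4.3.** If the model is `(κ_ef, κ_eg; Q)`-fully linear and
`δ ≤ min{1/κ_h, κ_fcd/(8 κ_ef)} ‖ĝ‖`, then the trial step decreases `f` by at least
`(κ_fcd/4) ‖ĝ‖ δ`. -/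
theorem stmt_8 {n p : ℕ} (f : EuclideanSpace ℝ (Fin n) → ℝ) (hf : Differentiable ℝ f)
    (Q : Matrix (Fin n) (Fin p) ℝ) (x : EuclideanSpace ℝ (Fin n))
    (δ : ℝ) (hδ : 0 < δ)
    -- the quadratic model m̂(s) = c + ĝᵀ s + (1/2) sᵀ Ĥ s
    (c : ℝ) (g : EuclideanSpace ℝ (Fin p)) (H : Matrix (Fin p) (Fin p) ℝ)
    (hHsymm : H.IsSymm) (κh : ℝ) (hκh : 1 ≤ κh) (hH : matOpNorm H ≤ κh)
    (mhat : EuclideanSpace ℝ (Fin p) → ℝ)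
    (hmhat : ∀ t, mhat t = c + ⟪g, t⟫ + 1 / 2 * ⟪t, Matrix.toEuclideanLin H t⟫)
    -- (κ_ef, κ_eg; Q)-full linearity of the model in B(x, δ; Q)
    (κef κeg : ℝ) (hκef : 0 < κef) (hκeg : 0 < κeg)
    (hfl : ∀ t : EuclideanSpace ℝ (Fin p), ‖t‖ ≤ δ →
      |f (x + Matrix.toEuclideanLin Q t) - mhat t| ≤ κef * δ ^ 2 ∧
      ‖Matrix.toEuclideanLin Qᵀ (gradient f (x + Matrix.toEuclideanLin Q t))
          - (g + Matrix.toEuclideanLin H t)‖ ≤ κeg * δ)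
    -- the trial step with the fraction-of-Cauchy-decrease property
    (sk : EuclideanSpace ℝ (Fin p)) (hsk : ‖sk‖ ≤ δ)
    (κfcd : ℝ) (hκfcd : κfcd ∈ Set.Ioc (0:ℝ) 1)
    (hcauchy : mhat 0 - mhat sk
      ≥ κfcd / 2 * ‖g‖ * min δ (‖g‖ / max (matOpNorm H) 1))
    (hδsmall : δ ≤ min (1 / κh) (κfcd / (8 * κef)) * ‖g‖) :
    f (x + Matrix.toEuclideanLin Q sk) - f x ≤ -(κfcd / 4) * ‖g‖ * δ := by
  have hg0 : (0:ℝ) ≤ ‖g‖ := norm_nonneg g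
  have hκh0 : (0:ℝ) < κh := lt_of_lt_of_le one_pos hκh
  have h1 : δ ≤ 1 / κh * ‖g‖ :=
    le_trans hδsmall (mul_le_mul_of_nonneg_right (min_le_left _ _) hg0)
  have h2 : δ ≤ κfcd / (8 * κef) * ‖g‖ :=
    le_trans hδsmall (mul_le_mul_of_nonneg_right (min_le_right _ _) hg0)
  have hM : max (matOpNorm H) 1 ≤ κh := max_le hH hκh
  have hM0 : (0:ℝ) < max (matOpNorm H) 1 := lt_of_lt_of_le one_pos (le_max_right _ _)
  have h3 : δ ≤ ‖g‖ / max (matOpNorm H) 1 := by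
    calc δ ≤ 1 / κh * ‖g‖ := h1
      _ = ‖g‖ / κh := by ring
      _ ≤ ‖g‖ / max (matOpNorm H) 1 := by gcongr
  rw [min_eq_left h3] at hcauchy
  obtain ⟨e0, -⟩ := hfl 0 (by simp [hδ.le])
  obtain ⟨es, -⟩ := hfl sk hsk
  simp only [map_zero, add_zero] at e0
  rw [abs_le] at e0 es
  have h4 := mul_le_mul_of_nonneg_right h2 (show (0:ℝ) ≤ 2 * κef * δ by positivity)
  have h5 : κfcd / (8 * κef) * ‖g‖ * (2 * κef * δ) = κfcd / 4 * ‖g‖ * δ := by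
    field_simp; ring
  rw [h5] at h4
  linarith [es.1, es.2, e0.1, e0.2]
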